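/- arXiv:1303.3461 — 4 statements merged into one kernel-verified Lean document; each statement's English description precedes it below -/
import Mathlib

section
/- Let d ≥ 3 be a natural number and let n be an integer with 0 ≤ n < d/3. Then the point m_{J(n)} = Σ_{ν ∈ J(n)} ν is a vertex (extreme point) of the polytope Q(d). -/
/-- The set of exponent vectors of degree-`d` monomials in three variables:
`Δ = {ν ∈ ℕ³ : ν₁ + ν₂ + ν₃ = d}`. -/
def Delta (d : ℕ) : Set (Fin 3 → ℕ) := {ν | ν 0 + ν 1 + ν 2 = d}

/-- `N(d)`: the collection of subsets `J ⊆ Δ` with `|J| = d + 1`. -/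
def Nd (d : ℕ) : Set (Finset (Fin 3 → ℕ)) := {J | ↑J ⊆ Delta d ∧ J.card = d + 1}

/-- `m_J = Σ_{ν ∈ J} ν ∈ ℕ³`. -/
def mJ (J : Finset (Fin 3 → ℕ)) : Fin 3 → ℕ := ∑ ν ∈ J, ν

/-- The inclusion `ℕ³ ⊆ ℝ³`. -/
def toR (ν : Fin 3 → ℕ) : Fin 3 → ℝ := fun i => (ν i : ℝ)

/-- The polytope `Q(d) = conv(m_J : J ∈ N(d)) ⊆ ℝ³`. -/
def Qpoly (d : ℕ) : Set (Fin 3 → ℝ) :=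
  convexHull ℝ {x | ∃ J ∈ Nd d, x = toR (mJ J)}

/-- The index set
`J(n) = {(d−a−1, a, 1) : 0 ≤ a ≤ n−1} ∪ {(d−b, b, 0) : 0 ≤ b ≤ d−n}`. -/
def Jn (d n : ℕ) : Finset (Fin 3 → ℕ) :=
  ((Finset.range n).image fun a => ![d - a - 1, a, 1]) ∪
    ((Finset.range (d - n + 1)).image fun b => ![d - b, b, 0])

lemma extreme_of_unique_min {E : Type*} [AddCommGroup E] [Module ℝ E]
    (f : E →ₗ[ℝ] ℝ) (s : Set E) (x : E) (hx : x ∈ s)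
    (h : ∀ y ∈ s, y ≠ x → f x < f y) :
    x ∈ Set.extremePoints ℝ (convexHull ℝ s) := by
  have hlb : ∀ w ∈ convexHull ℝ s, f x ≤ f w := by
    intro w hw
    exact convexHull_min (fun y hy => by
      by_cases hyx : y = x
      · simp [hyx]
      · exact (h y hy hyx).le) (convex_halfSpace_ge f.isLinear (f x)) hw
  have key : ∀ w ∈ convexHull ℝ s, f w = f x → w = x := by
    intro w hw hfw
    rw [_root_.convexHull_eq] at hw
    obtain ⟨ι, t, wt, z, hw0, hw1, hzs, hcm⟩ := hw
    rw [Finset.centerMass_eq_of_sum_1 _ _ hw1] at hcm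
    by_contra hwx
    have hex : ∃ i ∈ t, 0 < wt i ∧ z i ≠ x := by
      by_contra hc
      push_neg at hc
      apply hwx
      have hcon : ∀ i ∈ t, wt i • z i = wt i • x := by
        intro i hi
        rcases eq_or_lt_of_le (hw0 i hi) with h0 | h0
        · rw [← h0]; simp
        · rw [hc i hi h0]
      rw [← hcm, Finset.sum_congr rfl hcon, ← Finset.sum_smul, hw1, one_smul]
    obtain ⟨i0, hi0, hwi0, hzi0⟩ := hex
    have hstrict : ∑ i ∈ t, wt i * f x < ∑ i ∈ t, wt i * f (z i) := by
      refine Finset.sum_lt_sum (fun i hi => ?_) ⟨i0, hi0, ?_⟩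
      · by_cases hzx : z i = x
        · rw [hzx]
        · exact mul_le_mul_of_nonneg_left (h (z i) (hzs i hi) hzx).le (hw0 i hi)
      · exact mul_lt_mul_of_pos_left (h (z i0) (hzs i0 hi0) hzi0) hwi0
    have hw' : f w = ∑ i ∈ t, wt i * f (z i) := by
      rw [← hcm, map_sum]; simp [map_smul, smul_eq_mul]
    rw [hw'] at hfw
    have hsx : ∑ i ∈ t, wt i * f x = f x := by rw [← Finset.sum_mul, hw1, one_mul]
    linarith
  rw [mem_extremePoints]
  refine ⟨subset_convexHull ℝ s hx, fun x1 hx1 x2 hx2 hseg => ?_⟩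
  obtain ⟨a, b, ha, hb, hab, hsum⟩ := hseg
  have h1 : f x ≤ f x1 := hlb x1 hx1
  have h2 : f x ≤ f x2 := hlb x2 hx2
  have hfx : a * f x1 + b * f x2 = f x := by
    rw [← hsum]; simp [map_add, map_smul, smul_eq_mul]
  have e1 : f x1 = f x := by
    by_contra hne
    have hlt : f x < f x1 := lt_of_le_of_ne h1 (Ne.symm hne)
    have h3 := mul_lt_mul_of_pos_left hlt ha
    have h4 := mul_le_mul_of_nonneg_left h2 hb.le
    have h5 : a * f x + b * f x = f x := by rw [← add_mul, hab, one_mul]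
    linarith
  have e2 : f x2 = f x := by
    by_contra hne
    have hlt : f x < f x2 := lt_of_le_of_ne h2 (Ne.symm hne)
    have h3 := mul_lt_mul_of_pos_left hlt hb
    have h4 := mul_le_mul_of_nonneg_left h1 ha.le
    have h5 : a * f x + b * f x = f x := by rw [← add_mul, hab, one_mul]
    linarith
  exact ⟨key x1 hx1 e1, key x2 hx2 e2⟩


/-- The separating weight `ℓ(ν) = ν₁ + (d-2n+1)·ν₂`. -/
def ell (d n : ℕ) (ν : Fin 3 → ℕ) : ℕ := ν 1 + (d - 2 * n + 1) * ν 2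

lemma mem_Jn_iff {d n : ℕ} {ν : Fin 3 → ℕ} :
    ν ∈ Jn d n ↔ (∃ a < n, ![d - a - 1, a, 1] = ν) ∨
      (∃ b < d - n + 1, ![d - b, b, 0] = ν) := by
  simp [Jn, Finset.mem_union, Finset.mem_image, Finset.mem_range]

lemma Jn_mem_Nd {d n : ℕ} (hd : 3 ≤ d) (hn : 3 * n < d) : Jn d n ∈ Nd d := by
  constructor
  · intro ν hν
    rw [Finset.mem_coe, mem_Jn_iff] at hν
    rcases hν with ⟨a, ha, rfl⟩ | ⟨b, hb, rfl⟩ <;>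
      simp [Delta, Set.mem_setOf_eq] <;> omega
  · rw [Jn, Finset.card_union_of_disjoint, Finset.card_image_of_injective,
      Finset.card_image_of_injective, Finset.card_range, Finset.card_range]
    · omega
    · intro a b h
      have := congrFun h 1; simpa using this
    · intro a b h
      have := congrFun h 1; simpa using this
    · rw [Finset.disjoint_left]
      rintro x hx1 hx2
      simp only [Finset.mem_image, Finset.mem_range] at hx1 hx2
      obtain ⟨a, _, rfl⟩ := hx1
      obtain ⟨b, _, hb⟩ := hx2
      have := congrFun hb 2; simp at this

lemma ell_le {d n : ℕ} (hn : 3 * n < d) {ν : Fin 3 → ℕ} (hν : ν ∈ Jn d n) :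
    ell d n ν ≤ d - n := by
  rw [mem_Jn_iff] at hν
  rcases hν with ⟨a, ha, rfl⟩ | ⟨b, hb, rfl⟩ <;> simp [ell] <;> omega

lemma ell_ge {d n : ℕ} (hn : 3 * n < d) {ν : Fin 3 → ℕ} (hν : ν ∈ Delta d)
    (hnot : ν ∉ Jn d n) : d - n + 1 ≤ ell d n ν := by
  have hsum : ν 0 + ν 1 + ν 2 = d := hν
  rcases h2 : ν 2 with _ | m
  · by_contra hlt
    push_neg at hlt
    apply hnot
    rw [mem_Jn_iff]
    right
    refine ⟨ν 1, by simp [ell, h2] at hlt; omega, ?_⟩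
    funext i; fin_cases i <;> simp <;> omega
  · rcases h2' : m with _ | k
    · subst h2'
      by_cases hlt : ν 1 < n
      · exact absurd (mem_Jn_iff.mpr (Or.inl ⟨ν 1, hlt, by
          funext i; fin_cases i <;> simp <;> omega⟩)) hnot
      · simp only [ell, h2]
        omega
    · have hmul : (d - 2 * n + 1) * 2 ≤ (d - 2 * n + 1) * ν 2 :=
        Nat.mul_le_mul_left _ (by omega)
      have h1 : d - n + 1 ≤ (d - 2 * n + 1) * 2 := by omega
      calc d - n + 1 ≤ (d - 2 * n + 1) * ν 2 := le_trans h1 hmul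
        _ ≤ ell d n ν := Nat.le_add_left _ _

lemma sum_ell_lt {d n : ℕ} (hd : 3 ≤ d) (hn : 3 * n < d) {J : Finset (Fin 3 → ℕ)}
    (hJ : J ∈ Nd d) (hne : J ≠ Jn d n) :
    ∑ ν ∈ Jn d n, ell d n ν < ∑ ν ∈ J, ell d n ν := by
  obtain ⟨hJD, hJc⟩ := hJ
  have hJnc : (Jn d n).card = d + 1 := (Jn_mem_Nd hd hn).2
  have hIJ := Finset.card_inter_add_card_sdiff J (Jn d n)
  have hIJn := Finset.card_inter_add_card_sdiff (Jn d n) J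
  rw [Finset.inter_comm] at hIJn
  have hA0 : (J \ Jn d n).Nonempty := by
    rw [Finset.nonempty_iff_ne_empty]
    intro h
    have hsub : J ⊆ Jn d n := by rwa [← Finset.sdiff_eq_empty_iff_subset]
    exact hne (Finset.eq_of_subset_of_card_le hsub (by omega))
  have hk : 1 ≤ (J \ Jn d n).card := Finset.card_pos.mpr hA0
  have hBsum : ∑ ν ∈ Jn d n \ J, ell d n ν ≤ (Jn d n \ J).card * (d - n) := by
    have := Finset.sum_le_card_nsmul (Jn d n \ J) (ell d n) (d - n)
      (fun x hx => ell_le hn (Finset.mem_sdiff.mp hx).1)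
    simpa using this
  have hAsum : (J \ Jn d n).card * (d - n + 1) ≤ ∑ ν ∈ J \ Jn d n, ell d n ν := by
    have := Finset.card_nsmul_le_sum (J \ Jn d n) (ell d n) (d - n + 1)
      (fun x hx => by
        obtain ⟨hxJ, hxn⟩ := Finset.mem_sdiff.mp hx
        exact ell_ge hn (hJD hxJ) hxn)
    simpa using this
  have e1 : ∑ ν ∈ J \ Jn d n, ell d n ν + ∑ ν ∈ J ∩ Jn d n, ell d n ν
      = ∑ ν ∈ J, ell d n ν := by
    rw [← Finset.sum_union (Finset.disjoint_sdiff_inter _ _), Finset.sdiff_union_inter]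
  have e2 : ∑ ν ∈ Jn d n \ J, ell d n ν + ∑ ν ∈ Jn d n ∩ J, ell d n ν
      = ∑ ν ∈ Jn d n, ell d n ν := by
    rw [← Finset.sum_union (Finset.disjoint_sdiff_inter _ _), Finset.sdiff_union_inter]
  have hII : ∑ ν ∈ Jn d n ∩ J, ell d n ν = ∑ ν ∈ J ∩ Jn d n, ell d n ν := by
    rw [Finset.inter_comm]
  have hAB : (J \ Jn d n).card = (Jn d n \ J).card := by omega
  have hmul : (J \ Jn d n).card * (d - n + 1)
      = (J \ Jn d n).card * (d - n) + (J \ Jn d n).card := Nat.mul_succ _ _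
  rw [hAB] at hmul hk hAsum
  rw [hmul] at hAsum
  omega

noncomputable def sepMap (c : ℝ) : (Fin 3 → ℝ) →ₗ[ℝ] ℝ :=
  LinearMap.proj 1 + c • LinearMap.proj 2

lemma sepMap_apply (c : ℝ) (x : Fin 3 → ℝ) : sepMap c x = x 1 + c * x 2 := rfl

/-- For every `d ≥ 3` and `0 ≤ n < d/3`, the point `m_{J(n)}` is a vertex
(extreme point) of `Q(d)`. -/
theorem vertex_mJn (d n : ℕ) (hd : 3 ≤ d) (hn : 3 * n < d) :
    toR (mJ (Jn d n)) ∈ Set.extremePoints ℝ (Qpoly d) := by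
  have hfJ : ∀ J : Finset (Fin 3 → ℕ),
      sepMap ((d - 2 * n + 1 : ℕ) : ℝ) (toR (mJ J))
        = ((∑ ν ∈ J, ell d n ν : ℕ) : ℝ) := by
    intro J
    have h1 : mJ J 1 = ∑ ν ∈ J, ν 1 := Finset.sum_apply _ _ _
    have h2 : mJ J 2 = ∑ ν ∈ J, ν 2 := Finset.sum_apply _ _ _
    simp only [sepMap_apply, toR, h1, h2, ell]
    push_cast
    rw [Finset.sum_add_distrib, Finset.mul_sum]
  unfold Qpoly
  refine extreme_of_unique_min (sepMap ((d - 2 * n + 1 : ℕ) : ℝ)) _ _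
    ⟨Jn d n, Jn_mem_Nd hd hn, rfl⟩ ?_
  rintro y ⟨J, hJ, rfl⟩ hne
  rw [hfJ, hfJ]
  have hJne : J ≠ Jn d n := fun h => hne (by rw [h])
  exact_mod_cast sum_ell_lt hd hn hJ hJne
end

section
/- For every natural number d ≥ 3, the polytope Q(d) has at least d/3 vertices; that is, the number of extreme points of Q(d) is at least d/3. -/
/- ---------------- Auxiliary definitions ---------------- -/

def row0 (d i : ℕ) : Fin 3 → ℕ := ![i, d - i, 0]
def row1 (d i : ℕ) : Fin 3 → ℕ := ![i, d - 1 - i, 1]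

def Ak (d k : ℕ) : Finset (Fin 3 → ℕ) :=
  (Finset.Icc k d).image (row0 d) ∪ (Finset.Icc (d - k) (d - 1)).image (row1 d)

def phiF (β : ℕ) (ν : Fin 3 → ℕ) : ℝ := (ν 0 : ℝ) - (β : ℝ) * (ν 2 : ℝ)

noncomputable def Lmap (β : ℕ) : (Fin 3 → ℝ) →ₗ[ℝ] ℝ :=
  LinearMap.proj 0 - (β : ℝ) • LinearMap.proj 2

lemma Lmap_apply (β : ℕ) (y : Fin 3 → ℝ) : Lmap β y = y 0 - (β : ℝ) * y 2 := by
  simp [Lmap, smul_eq_mul]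

lemma Lmap_mJ (β : ℕ) (J : Finset (Fin 3 → ℕ)) :
    Lmap β (toR (mJ J)) = ∑ ν ∈ J, phiF β ν := by
  have h0 : toR (mJ J) 0 = ∑ ν ∈ J, (ν 0 : ℝ) := by
    simp [toR, mJ, Finset.sum_apply]
  have h2 : toR (mJ J) 2 = ∑ ν ∈ J, (ν 2 : ℝ) := by
    simp [toR, mJ, Finset.sum_apply]
  rw [Lmap_apply, h0, h2, Finset.mul_sum, ← Finset.sum_sub_distrib]
  rfl

/- ---------------- generic sum comparison ---------------- -/

lemma aux_sum_lt {α : Type*} [DecidableEq α] {A J : Finset α} (φ : α → ℝ) (c : ℝ)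
    (hA : ∀ ν ∈ A, c + 1 ≤ φ ν) (hJc : ∀ ν ∈ J, ν ∉ A → φ ν ≤ c)
    (hcard : J.card = A.card) (hne : J ≠ A) :
    ∑ ν ∈ J, φ ν < ∑ ν ∈ A, φ ν := by
  classical
  have hJsplit := Finset.sum_filter_add_sum_filter_not J (· ∈ A) φ
  have hAsplit := Finset.sum_filter_add_sum_filter_not A (· ∈ J) φ
  have hsame : J.filter (· ∈ A) = A.filter (· ∈ J) := by
    rw [Finset.filter_mem_eq_inter, Finset.filter_mem_eq_inter, Finset.inter_comm]
  have hcards : (J.filter (fun x => ¬ x ∈ A)).card = (A.filter (fun x => ¬ x ∈ J)).card := by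
    have h1 := Finset.card_filter_add_card_filter_not (s := J) (p := (· ∈ A))
    have h2 := Finset.card_filter_add_card_filter_not (s := A) (p := (· ∈ J))
    have h3 := congrArg Finset.card hsame
    omega
  have hpos : 1 ≤ (A.filter (fun x => ¬ x ∈ J)).card := by
    rcases Nat.eq_zero_or_pos (A.filter (fun x => ¬ x ∈ J)).card with h | h
    · exfalso
      rw [Finset.card_eq_zero, Finset.filter_eq_empty_iff] at h
      have hsub : A ⊆ J := by
        intro x hx
        have := h hx
        simpa using this
      exact hne (Finset.eq_of_subset_of_card_le hsub (le_of_eq hcard)).symm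
    · exact h
  have h1 : ∑ ν ∈ J.filter (fun x => ¬ x ∈ A), φ ν
      ≤ ((J.filter (fun x => ¬ x ∈ A)).card : ℝ) * c := by
    have h := Finset.sum_le_card_nsmul (J.filter (fun x => ¬ x ∈ A)) φ c
      (fun x hx => hJc x (Finset.mem_filter.1 hx).1 (Finset.mem_filter.1 hx).2)
    rwa [nsmul_eq_mul] at h
  have h2 : ((A.filter (fun x => ¬ x ∈ J)).card : ℝ) * (c + 1)
      ≤ ∑ ν ∈ A.filter (fun x => ¬ x ∈ J), φ ν := by
    have h := Finset.card_nsmul_le_sum (A.filter (fun x => ¬ x ∈ J)) φ (c + 1)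
      (fun x hx => hA x (Finset.mem_filter.1 hx).1)
    rwa [nsmul_eq_mul] at h
  have hc1 : (1 : ℝ) ≤ ((A.filter (fun x => ¬ x ∈ J)).card : ℝ) := by exact_mod_cast hpos
  have hcR : ((J.filter (fun x => ¬ x ∈ A)).card : ℝ)
      = ((A.filter (fun x => ¬ x ∈ J)).card : ℝ) := by exact_mod_cast hcards
  rw [← hJsplit, ← hAsplit, hsame]
  rw [hcR] at h1
  nlinarith [h1, h2, hc1]

/- ---------------- extreme point criterion ---------------- -/

lemma aux_extreme {S : Set (Fin 3 → ℝ)} (l : (Fin 3 → ℝ) →ₗ[ℝ] ℝ) {x : Fin 3 → ℝ}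
    (hx : x ∈ S) (h : ∀ y ∈ S, y ≠ x → l y < l x) :
    x ∈ Set.extremePoints ℝ (convexHull ℝ S) := by
  have key : convexHull ℝ S ⊆ {y | l y ≤ l x ∧ (l y = l x → y = x)} := by
    apply convexHull_min
    · intro y hy
      by_cases hyx : y = x
      · subst hyx; exact ⟨le_rfl, fun _ => rfl⟩
      · exact ⟨(h y hy hyx).le, fun he => absurd he (h y hy hyx).ne⟩
    · intro y₁ h₁ y₂ h₂ a b ha hb hab
      have hly : l (a • y₁ + b • y₂) = a * l y₁ + b * l y₂ := by
        simp [map_add, map_smul, smul_eq_mul]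
      constructor
      · rw [hly]
        have hxx : a * l x + b * l x = l x := by rw [← add_mul, hab, one_mul]
        linarith [mul_le_mul_of_nonneg_left h₁.1 ha, mul_le_mul_of_nonneg_left h₂.1 hb]
      · intro he
        rw [hly] at he
        rcases ha.eq_or_lt with rfl | ha'
        · have hb1 : b = 1 := by linarith
        -- a = 0
          subst hb1
          simpa using h₂.2 (by simpa using he)
        · rcases hb.eq_or_lt with rfl | hb'
          · have ha1 : a = 1 := by linarith
            subst ha1
            simpa using h₁.2 (by simpa using he)
          · have hxx : a * l x + b * l x = l x := by rw [← add_mul, hab, one_mul]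
            have e₁ : l y₁ = l x := by
              by_contra hne
              have hlt : l y₁ < l x := lt_of_le_of_ne h₁.1 hne
              linarith [mul_lt_mul_of_pos_left hlt ha',
                mul_le_mul_of_nonneg_left h₂.1 hb]
            have e₂ : l y₂ = l x := by
              by_contra hne
              have hlt : l y₂ < l x := lt_of_le_of_ne h₂.1 hne
              linarith [mul_lt_mul_of_pos_left hlt hb',
                mul_le_mul_of_nonneg_left h₁.1 ha]
            rw [h₁.2 e₁, h₂.2 e₂, ← add_smul, hab, one_smul]
  refine ⟨subset_convexHull ℝ S hx, ?_⟩
  intro x₁ hx₁ x₂ hx₂ hxseg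
  obtain ⟨a, b, ha, hb, hab, hsum⟩ := hxseg
  have k₁ := key hx₁
  have k₂ := key hx₂
  have hlx : a * l x₁ + b * l x₂ = l x := by
    rw [← hsum]
    simp [map_add, map_smul, smul_eq_mul]
  have hxx : a * l x + b * l x = l x := by rw [← add_mul, hab, one_mul]
  have e₁ : l x₁ = l x := by
    by_contra hne
    have hlt : l x₁ < l x := lt_of_le_of_ne k₁.1 hne
    linarith [mul_lt_mul_of_pos_left hlt ha,
      mul_le_mul_of_nonneg_left k₂.1 hb.le]
  have e₂ : l x₂ = l x := by
    by_contra hne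
    have hlt : l x₂ < l x := lt_of_le_of_ne k₂.1 hne
    linarith [mul_lt_mul_of_pos_left hlt hb,
      mul_le_mul_of_nonneg_left k₁.1 ha.le]
  exact k₁.2 e₁

/- ---------------- properties of Ak ---------------- -/

lemma mem_Ak_iff {d k : ℕ} {ν : Fin 3 → ℕ} :
    ν ∈ Ak d k ↔ (∃ i, (k ≤ i ∧ i ≤ d) ∧ row0 d i = ν)
      ∨ (∃ i, (d - k ≤ i ∧ i ≤ d - 1) ∧ row1 d i = ν) := by
  simp [Ak, Finset.mem_union, Finset.mem_image, Finset.mem_Icc]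

lemma row0_inj (d : ℕ) : Function.Injective (row0 d) := by
  intro a b h
  have := congrFun h 0
  simpa [row0] using this

lemma row1_inj (d : ℕ) : Function.Injective (row1 d) := by
  intro a b h
  have := congrFun h 0
  simpa [row1] using this

lemma Ak_card (d k : ℕ) (hd : 1 ≤ d) (hk : k ≤ d) : (Ak d k).card = d + 1 := by
  have hdisj : Disjoint ((Finset.Icc k d).image (row0 d))
      ((Finset.Icc (d - k) (d - 1)).image (row1 d)) := by
    rw [Finset.disjoint_left]
    rintro x hx hx'
    obtain ⟨i, _, hi⟩ := Finset.mem_image.1 hx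
    obtain ⟨j, _, hj⟩ := Finset.mem_image.1 hx'
    have := congrFun (hi.trans hj.symm) 2
    simp [row0, row1] at this
  rw [Ak, Finset.card_union_of_disjoint hdisj,
    Finset.card_image_of_injective _ (row0_inj d),
    Finset.card_image_of_injective _ (row1_inj d), Nat.card_Icc, Nat.card_Icc]
  omega

lemma Ak_mem_Nd {d k : ℕ} (hd : 3 ≤ d) (hk : k ≤ d) : Ak d k ∈ Nd d := by
  constructor
  · intro ν hν
    rcases mem_Ak_iff.1 hν with ⟨i, ⟨_, hid⟩, rfl⟩ | ⟨i, ⟨_, hid⟩, rfl⟩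
    · show i + (d - i) + 0 = d
      omega
    · show i + (d - 1 - i) + 1 = d
      omega
  · exact Ak_card d k (by omega) hk

/- ---------------- the separating functional bounds ---------------- -/

lemma phi_lower {d k : ℕ} (h3k : 3 * k ≤ d + 1) (hd : 3 ≤ d) {ν : Fin 3 → ℕ}
    (hν : ν ∈ Ak d k) : (k : ℝ) ≤ phiF (d - 2 * k) ν := by
  have h2k : 2 * k ≤ d := by omega
  have hbR : ((d - 2 * k : ℕ) : ℝ) = (d : ℝ) - 2 * k := by
    rw [Nat.cast_sub h2k]; push_cast; ring
  rcases mem_Ak_iff.1 hν with ⟨i, ⟨hki, hid⟩, rfl⟩ | ⟨i, ⟨hdi, hid⟩, rfl⟩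
  · have h0 : row0 d i 0 = i := rfl
    have h2 : row0 d i 2 = 0 := rfl
    rw [phiF, h0, h2]
    have : (k : ℝ) ≤ i := by exact_mod_cast hki
    simp
    linarith
  · have h0 : row1 d i 0 = i := rfl
    have h2 : row1 d i 2 = 1 := rfl
    rw [phiF, h0, h2, hbR]
    have hi : d ≤ i + k := by omega
    have hiR : (d : ℝ) ≤ (i : ℝ) + k := by exact_mod_cast hi
    push_cast
    linarith

lemma phi_upper {d k : ℕ} (h3k : 3 * k ≤ d + 1) (hd : 3 ≤ d) {ν : Fin 3 → ℕ}
    (hν : ν ∈ Delta d) (hA : ν ∉ Ak d k) :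
    phiF (d - 2 * k) ν ≤ (k : ℝ) - 1 := by
  have h2k : 2 * k ≤ d := by omega
  have hbR : ((d - 2 * k : ℕ) : ℝ) = (d : ℝ) - 2 * k := by
    rw [Nat.cast_sub h2k]; push_cast; ring
  have hsum : ν 0 + ν 1 + ν 2 = d := hν
  by_cases hj0 : ν 2 = 0
  · have heq : row0 d (ν 0) = ν := by
      funext x
      fin_cases x <;> simp [row0] <;> omega
    have hnk : ¬ (k ≤ ν 0) := by
      intro hk'
      exact hA (mem_Ak_iff.2 (Or.inl ⟨ν 0, ⟨hk', by omega⟩, heq⟩))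
    have h1 : ν 0 + 1 ≤ k := by omega
    have h1R : (ν 0 : ℝ) + 1 ≤ k := by exact_mod_cast h1
    rw [phiF, hj0]
    push_cast
    linarith
  · by_cases hj1 : ν 2 = 1
    · have heq : row1 d (ν 0) = ν := by
        funext x
        fin_cases x <;> simp [row1] <;> omega
      have hν0 : ν 0 ≤ d - 1 := by omega
      have hnk : ¬ (d - k ≤ ν 0) := by
        intro hk'
        exact hA (mem_Ak_iff.2 (Or.inr ⟨ν 0, ⟨hk', hν0⟩, heq⟩))
      have h1 : ν 0 + 1 + k ≤ d := by omega
      have h1R : (ν 0 : ℝ) + 1 + k ≤ d := by exact_mod_cast h1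
      rw [phiF, hj1, hbR]
      push_cast
      linarith
    · have hj2 : 2 ≤ ν 2 := by omega
      have haj : ν 0 + ν 2 ≤ d := by omega
      have hajR : (ν 0 : ℝ) + (ν 2 : ℝ) ≤ d := by exact_mod_cast haj
      have hj2R : (2 : ℝ) ≤ (ν 2 : ℝ) := by exact_mod_cast hj2
      have hβ0 : (0 : ℝ) ≤ (d : ℝ) - 2 * k := by
        have : 2 * k ≤ d := h2k
        have := (Nat.cast_le (α := ℝ)).2 this
        push_cast at this
        linarith
      have h3kR : 3 * (k : ℝ) ≤ (d : ℝ) + 1 := by exact_mod_cast h3k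
      rw [phiF, hbR]
      nlinarith [mul_nonneg hβ0 (by linarith : (0 : ℝ) ≤ (ν 2 : ℝ) - 2)]

lemma sum_phi_lt {d k : ℕ} (h3k : 3 * k ≤ d + 1) (hd : 3 ≤ d) {J : Finset (Fin 3 → ℕ)}
    (hJ : J ∈ Nd d) (hne : J ≠ Ak d k) :
    Lmap (d - 2 * k) (toR (mJ J)) < Lmap (d - 2 * k) (toR (mJ (Ak d k))) := by
  rw [Lmap_mJ, Lmap_mJ]
  apply aux_sum_lt (c := (k : ℝ) - 1)
  · intro ν hν
    have := phi_lower h3k hd hν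
    linarith
  · intro ν hν hνA
    exact phi_upper h3k hd (hJ.1 hν) hνA
  · rw [hJ.2, Ak_card d k (by omega) (by omega)]
  · exact hne

lemma Ak_ne {d k k' : ℕ} (hkd : k ≤ d) (hk'd : k' ≤ d) (hne : k ≠ k') :
    Ak d k ≠ Ak d k' := by
  intro h
  have m1 : row0 d k ∈ Ak d k := mem_Ak_iff.2 (Or.inl ⟨k, ⟨le_rfl, hkd⟩, rfl⟩)
  have m2 : row0 d k' ∈ Ak d k' := mem_Ak_iff.2 (Or.inl ⟨k', ⟨le_rfl, hk'd⟩, rfl⟩)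
  rw [h] at m1
  rw [← h] at m2
  have hk'k : k' ≤ k := by
    rcases mem_Ak_iff.1 m1 with ⟨i, ⟨hk'i, _⟩, heq⟩ | ⟨i, _, heq⟩
    · have h0 := congrFun heq 0
      simp [row0] at h0
      omega
    · have h2 := congrFun heq 2
      simp [row0, row1] at h2
  have hkk' : k ≤ k' := by
    rcases mem_Ak_iff.1 m2 with ⟨i, ⟨hki, _⟩, heq⟩ | ⟨i, _, heq⟩
    · have h0 := congrFun heq 0
      simp [row0] at h0
      omega
    · have h2 := congrFun heq 2
      simp [row0, row1] at h2
  omega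

/- ---------------- main theorem ---------------- -/

/-- For every `d ≥ 3`, the polytope `Q(d)` has at least `d/3` vertices:
the number of extreme points of `Q(d)` is at least `d/3`. -/
theorem Qpoly_vertices_ge (d : ℕ) (hd : 3 ≤ d) :
    (d : ℝ) / 3 ≤ ((Set.extremePoints ℝ (Qpoly d)).ncard : ℝ) := by
  classical
  set S : Set (Fin 3 → ℝ) := {x | ∃ J ∈ Nd d, x = toR (mJ J)} with hSdef
  have hQ : Qpoly d = convexHull ℝ S := rfl
  -- finiteness
  have hΔfin : (Delta d).Finite := by
    apply (Set.finite_Icc (fun _ : Fin 3 => 0) (fun _ : Fin 3 => d)).subset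
    intro ν hν
    have hs : ν 0 + ν 1 + ν 2 = d := hν
    simp only [Set.mem_Icc, Pi.le_def]
    refine ⟨fun i => Nat.zero_le _, fun i => ?_⟩
    have h1 : ν i ≤ ∑ j, ν j :=
      Finset.single_le_sum (f := ν) (fun _ _ => Nat.zero_le _) (Finset.mem_univ i)
    rw [Fin.sum_univ_three] at h1
    omega
  have hNdfin : (Nd d).Finite := by
    have h1 : {t : Set (Fin 3 → ℕ) | t ⊆ Delta d}.Finite := hΔfin.finite_subsets
    have h2 : Nd d ⊆ (fun (J : Finset (Fin 3 → ℕ)) => (↑J : Set (Fin 3 → ℕ))) ⁻¹' {t | t ⊆ Delta d} :=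
      fun J hJ => hJ.1
    exact (h1.preimage (Finset.coe_injective.injOn)).subset h2
  have hSfin : S.Finite := by
    have him : S = (fun J => toR (mJ J)) '' (Nd d) := by
      ext x
      constructor
      · rintro ⟨J, hJ, rfl⟩
        exact ⟨J, hJ, rfl⟩
      · rintro ⟨J, hJ, rfl⟩
        exact ⟨J, hJ, rfl⟩
    rw [him]
    exact hNdfin.image _
  have hEsub : Set.extremePoints ℝ (Qpoly d) ⊆ S := by
    rw [hQ]
    exact extremePoints_convexHull_subset
  have hEfin : (Set.extremePoints ℝ (Qpoly d)).Finite := hSfin.subset hEsub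
  -- the family of vertices
  set K := (d + 1) / 3 with hKdef
  have h3K : 3 * K ≤ d + 1 := by
    have := Nat.div_mul_le_self (d + 1) 3
    omega
  set g : ℕ → (Fin 3 → ℝ) := fun k => toR (mJ (Ak d k)) with hgdef
  have hextreme : ∀ k, 3 * k ≤ d + 1 → g k ∈ Set.extremePoints ℝ (Qpoly d) := by
    intro k hk
    rw [hQ]
    apply aux_extreme (Lmap (d - 2 * k))
    · exact ⟨Ak d k, Ak_mem_Nd hd (by omega), rfl⟩
    · rintro y ⟨J, hJ, rfl⟩ hyne
      apply sum_phi_lt hk hd hJ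
      intro hJA
      exact hyne (by rw [hJA])
  set T : Finset (Fin 3 → ℝ) := (Finset.range (K + 1)).image g with hTdef
  have hTcard : T.card = K + 1 := by
    rw [hTdef, Finset.card_image_of_injOn, Finset.card_range]
    intro a ha b hb hab
    by_contra hne
    have haK : a ≤ K := by
      have := Finset.mem_range.1 ha; omega
    have hbK : b ≤ K := by
      have := Finset.mem_range.1 hb; omega
    have h3a : 3 * a ≤ d + 1 := by omega
    have h3b : 3 * b ≤ d + 1 := by omega
    have hAne : Ak d b ≠ Ak d a := Ak_ne (by omega) (by omega) (Ne.symm hne)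
    have hlt := sum_phi_lt h3a hd (Ak_mem_Nd hd (by omega : b ≤ d)) hAne
    rw [show toR (mJ (Ak d b)) = g b from rfl, show toR (mJ (Ak d a)) = g a from rfl,
      hab] at hlt
    exact lt_irrefl _ hlt
  have hTsub : (↑T : Set (Fin 3 → ℝ)) ⊆ Set.extremePoints ℝ (Qpoly d) := by
    intro x hx
    rw [hTdef, Finset.coe_image] at hx
    obtain ⟨k, hk, rfl⟩ := hx
    have hkK : k ≤ K := by
      have := Finset.mem_range.1 (Finset.mem_coe.1 hk); omega
    exact hextreme k (by omega)
  have hcard : K + 1 ≤ (Set.extremePoints ℝ (Qpoly d)).ncard := by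
    rw [← hTcard, ← Set.ncard_coe_finset]
    exact Set.ncard_le_ncard hTsub hEfin
  have hK3 : d + 1 < 3 * (K + 1) := by
    have h := Nat.div_add_mod (d + 1) 3
    have h2 : (d + 1) % 3 < 3 := Nat.mod_lt _ (by norm_num)
    omega
  have step1 : (d : ℝ) / 3 ≤ ((K + 1 : ℕ) : ℝ) := by
    rw [div_le_iff₀ (by norm_num : (0 : ℝ) < 3)]
    have : ((d : ℝ) + 1) < 3 * ((K : ℝ) + 1) := by exact_mod_cast hK3
    push_cast
    linarith
  refine le_trans step1 ?_
  exact_mod_cast hcard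
end

section
/- Let d ≥ 3 and let n be an integer with 0 ≤ n < d/3. Set ω(n) = (2n−d−2, 2n−d+1, 2d−4n+1) ∈ ℝ³. Then ω(n)·m_{J(n)} < ω(n)·m_{J'} for every J' ∈ N(d) with J' ≠ J(n). -/
/-- The standard inner product `ω · ν` on `ℝ³` (viewing `ℕ³ ⊆ ℝ³`). -/
def dotp (ω : Fin 3 → ℝ) (ν : Fin 3 → ℕ) : ℝ := ∑ i, ω i * (ν i : ℝ)

/-- `ω(n) = (2n − d − 2, 2n − d + 1, 2d − 4n + 1) ∈ ℝ³`. -/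
def omegaN (d n : ℕ) : Fin 3 → ℝ :=
  ![2 * (n : ℝ) - d - 2, 2 * (n : ℝ) - d + 1, 2 * (d : ℝ) - 4 * n + 1]

lemma mem_Jn (d n : ℕ) (ν : Fin 3 → ℕ) :
    ν ∈ Jn d n ↔ (∃ a, a < n ∧ ![d - a - 1, a, 1] = ν) ∨
      (∃ b, b < d - n + 1 ∧ ![d - b, b, 0] = ν) := by
  simp [Jn, Finset.mem_union, Finset.mem_image, Finset.mem_range]

lemma dotp_formula (d n : ℕ) (ν : Fin 3 → ℕ) (h : ν 0 + ν 1 + ν 2 = d) :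
    dotp (omegaN d n) ν =
      (2*(n:ℝ) - d - 2)*d + 3*(ν 1 : ℝ) + 3*((d:ℝ) - 2*n + 1)*(ν 2 : ℝ) := by
  have hc : (ν 0 : ℝ) + ν 1 + ν 2 = d := by exact_mod_cast congrArg (Nat.cast : ℕ → ℝ) h
  simp only [dotp, omegaN, Fin.sum_univ_three]
  norm_num [Matrix.cons_val_zero, Matrix.cons_val_one, Matrix.head_cons, Matrix.cons_val_two, Matrix.tail_cons]
  linear_combination (2*(n:ℝ) - d - 2) * hc

lemma dotp_mJ (ω : Fin 3 → ℝ) (J : Finset (Fin 3 → ℕ)) :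
    dotp ω (mJ J) = ∑ ν ∈ J, dotp ω ν := by
  simp only [dotp, mJ, Finset.sum_apply, Nat.cast_sum, Finset.mul_sum]
  rw [Finset.sum_comm]

lemma dotp_upper (d n : ℕ) (hn : 3 * n < d) (μ : Fin 3 → ℕ) (hμ : μ ∈ Jn d n) :
    dotp (omegaN d n) μ ≤ (2*(n:ℝ) - d - 2)*d + 3*((d:ℝ) - n) := by
  rcases (mem_Jn d n μ).1 hμ with ⟨a, ha, h⟩ | ⟨b, hb, h⟩ <;> subst h
  · rw [dotp_formula d n _ (by simp; omega)]
    have h1 : (a:ℝ) + 1 ≤ n := by exact_mod_cast ha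
    simp only [Matrix.cons_val_one, Matrix.head_cons, Matrix.cons_val_two, Matrix.tail_cons]
    norm_num
    nlinarith
  · rw [dotp_formula d n _ (by simp; omega)]
    have h1 : (b:ℝ) + n ≤ d := by exact_mod_cast (by omega : b + n ≤ d)
    simp only [Matrix.cons_val_one, Matrix.head_cons, Matrix.cons_val_two, Matrix.tail_cons]
    norm_num
    nlinarith

lemma dotp_lower (d n : ℕ) (hn : 3 * n < d) (ν : Fin 3 → ℕ)
    (hΔ : ν 0 + ν 1 + ν 2 = d) (hν : ν ∉ Jn d n) :
    (2*(n:ℝ) - d - 2)*d + 3*((d:ℝ) - n) + 3 ≤ dotp (omegaN d n) ν := by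
  rw [dotp_formula d n ν hΔ]
  have hd3 : 3*(n:ℝ) + 1 ≤ d := by exact_mod_cast hn
  by_cases hz0 : ν 2 = 0
  · have hb : d + 1 ≤ ν 1 + n := by
      by_contra hcon
      apply hν
      rw [mem_Jn]
      right
      exact ⟨ν 1, by omega, by funext i; fin_cases i <;> simp <;> omega⟩
    have h1 : (d:ℝ) + 1 ≤ ν 1 + n := by exact_mod_cast hb
    rw [hz0]
    push_cast
    linarith
  · by_cases hz1 : ν 2 = 1
    · have hb : n ≤ ν 1 := by
        by_contra hcon
        apply hν
        rw [mem_Jn]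
        left
        exact ⟨ν 1, by omega, by funext i; fin_cases i <;> simp <;> omega⟩
      have h1 : (n:ℝ) ≤ ν 1 := by exact_mod_cast hb
      rw [hz1]
      push_cast
      linarith
    · have hb : 2 ≤ ν 2 := by omega
      have h1 : (2:ℝ) ≤ ν 2 := by exact_mod_cast hb
      have h2 : (0:ℝ) ≤ ν 1 := by positivity
      nlinarith [mul_nonneg (show (0:ℝ) ≤ (d:ℝ) - 2*n + 1 by linarith)
        (show (0:ℝ) ≤ (ν 2 : ℝ) - 2 by linarith)]

lemma Jn_subset (d n : ℕ) (hn : 3 * n < d) : ↑(Jn d n) ⊆ Delta d := by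
  intro ν hν
  rcases (mem_Jn d n ν).1 hν with ⟨a, ha, h⟩ | ⟨b, hb, h⟩ <;> subst h <;>
    simp [Delta] <;> omega

lemma Jn_card (d n : ℕ) (hn : 3 * n < d) : (Jn d n).card = d + 1 := by
  rw [Jn, Finset.card_union_of_disjoint, Finset.card_image_of_injective,
    Finset.card_image_of_injective, Finset.card_range, Finset.card_range]
  · omega
  · intro a b h
    simpa using congrFun h 1
  · intro a b h
    simpa using congrFun h 1
  · rw [Finset.disjoint_left]
    rintro x hx hx'
    simp only [Finset.mem_image, Finset.mem_range] at hx hx'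
    obtain ⟨a, _, ha⟩ := hx
    obtain ⟨b, _, hb⟩ := hx'
    have t1 := congrFun ha 2
    have t2 := congrFun hb 2
    simp at t1 t2
    omega


/-- For `d ≥ 3` and `0 ≤ n < d/3` one has `ω(n)·m_{J(n)} < ω(n)·m_{J'}`
for every `J' ∈ N(d)` with `J' ≠ J(n)`. -/
theorem omega_mJn_min (d n : ℕ) (hd : 3 ≤ d) (hn : 3 * n < d) :
    ∀ J' ∈ Nd d, J' ≠ Jn d n →
      dotp (omegaN d n) (mJ (Jn d n)) < dotp (omegaN d n) (mJ J') := by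
  intro T hT hTne
  obtain ⟨hTsub, hTcard⟩ := hT
  set S := Jn d n with hS
  set ω := omegaN d n with hω
  set B : ℝ := (2*(n:ℝ) - d - 2)*d + 3*((d:ℝ) - n) with hB
  rw [dotp_mJ, dotp_mJ]
  -- split sums
  rw [← Finset.sum_inter_add_sum_sdiff S T (fun ν => dotp ω ν),
      ← Finset.sum_inter_add_sum_sdiff T S (fun ν => dotp ω ν), Finset.inter_comm T S]
  have hcards : (S \ T).card = (T \ S).card :=
    Finset.card_sdiff_comm (by rw [hTcard, Jn_card d n hn])
  have hne : (S \ T).Nonempty := by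
    rw [Finset.sdiff_nonempty]
    intro hsub
    exact hTne (Finset.eq_of_subset_of_card_le hsub
      (by rw [hTcard, Jn_card d n hn])).symm
  have h1 : ∑ ν ∈ S \ T, dotp ω ν ≤ (S \ T).card • B := by
    apply Finset.sum_le_card_nsmul
    intro μ hμ
    exact dotp_upper d n hn μ (Finset.mem_sdiff.1 hμ).1
  have h2 : (T \ S).card • (B + 3) ≤ ∑ ν ∈ T \ S, dotp ω ν := by
    apply Finset.card_nsmul_le_sum
    intro ν hν
    rw [Finset.mem_sdiff] at hν
    exact dotp_lower d n hn ν (hTsub hν.1) hν.2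
  have hcpos : 1 ≤ ((S \ T).card : ℝ) := by
    have := Finset.card_pos.2 hne
    exact_mod_cast this
  rw [nsmul_eq_mul] at h1 h2
  rw [← hcards] at h2
  have : ((S \ T).card : ℝ) * B < ((S \ T).card : ℝ) * (B + 3) := by nlinarith
  linarith
end

section
/- Let d ∈ ℕ and let m be an integer with 1 ≤ m ≤ d. Let E be the m×m matrix with entries E_{ij} = C(d−i, j−1) (binomial coefficient) for 1 ≤ i, j ≤ m. Then det(E) = 1 or det(E) = −1; in particular |det(E)| = 1. -/
/-- For `d ∈ ℕ` and `1 ≤ m ≤ d`, the `m × m` matrix `E` over `ℤ` with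
(1-indexed) entries `Eᵢⱼ = C(d−i, j−1)` has determinant `1` or `−1`. -/
theorem det_E_pm_one (d m : ℕ) (hm1 : 1 ≤ m) (hmd : m ≤ d)
    (E : Matrix (Fin m) (Fin m) ℤ)
    (hE : ∀ i j : Fin m, E i j = ((d - 1 - i.val).choose j.val : ℤ)) :
    E.det = 1 ∨ E.det = -1 := by
  classical
  set T : Matrix (Fin m) (Fin m) ℤ := fun i k => ((i.val).choose k.val : ℤ) with hT
  set U : Matrix (Fin m) (Fin m) ℤ :=
    fun k j => if k ≤ j then ((d - m).choose (j.val - k.val) : ℤ) else 0 with hU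
  have hLU : E = (T.submatrix Fin.rev id) * U := by
    ext i j
    rw [hE, Matrix.mul_apply]
    have hrev : (Fin.rev i).val = m - 1 - i.val := by
      simp [Fin.rev, Nat.sub_sub, Nat.add_comm]
    have key : ((d - 1 - i.val).choose j.val : ℤ)
        = ∑ k : Fin m, ((m - 1 - i.val).choose k.val : ℤ) *
            (if k ≤ j then ((d - m).choose (j.val - k.val) : ℤ) else 0) := by
      have hsplit : (m - 1 - i.val) + (d - m) = d - 1 - i.val := by omega
      have hv := Nat.add_choose_eq (m - 1 - i.val) (d - m) j.val
      rw [hsplit, Finset.Nat.sum_antidiagonal_eq_sum_range_succ_mk] at hv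
      have hjm : j.val + 1 ≤ m := j.isLt
      have hs : (∑ k : Fin m, ((m - 1 - i.val).choose k.val : ℤ) *
            (if k ≤ j then ((d - m).choose (j.val - k.val) : ℤ) else 0))
          = ∑ k ∈ Finset.range (j.val + 1),
              (((m - 1 - i.val).choose k : ℤ) * ((d - m).choose (j.val - k) : ℤ)) := by
        simp only [Fin.le_def]
        rw [Fin.sum_univ_eq_sum_range (fun k =>
          ((m - 1 - i.val).choose k : ℤ) *
            (if k ≤ j.val then ((d - m).choose (j.val - k) : ℤ) else 0))]
        rw [← Finset.sum_range_add_sum_Ico _ hjm]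
        have h2 : ∑ k ∈ Finset.Ico (j.val + 1) m,
            (((m - 1 - i.val).choose k : ℤ) *
              (if k ≤ j.val then ((d - m).choose (j.val - k) : ℤ) else 0)) = 0 := by
          apply Finset.sum_eq_zero
          intro k hk
          simp only [Finset.mem_Ico] at hk
          rw [if_neg (by omega)]
          ring
        rw [h2, add_zero]
        apply Finset.sum_congr rfl
        intro k hk
        simp only [Finset.mem_range] at hk
        rw [if_pos (by omega)]
      rw [hs, hv]
      push_cast
      rfl
    rw [key]
    apply Finset.sum_congr rfl
    intro k _
    congr 1
    simp only [Matrix.submatrix_apply, hT, hrev, id]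
    show _ = (((Fin.rev i).val).choose k.val : ℤ)
    rw [hrev]
  have hdetT : T.det = 1 := by
    have htri : T.BlockTriangular OrderDual.toDual := by
      intro i j hij
      simp only [OrderDual.toDual_lt_toDual] at hij
      simp [hT, Nat.choose_eq_zero_of_lt (by exact_mod_cast hij)]
    rw [Matrix.det_of_lowerTriangular T htri]
    apply Finset.prod_eq_one
    intro i _
    simp [hT]
  have hdetU : U.det = 1 := by
    have htri : U.BlockTriangular id := by
      intro i j hij
      simp only [id] at hij
      simp [hU, not_le.mpr hij]
    rw [Matrix.det_of_upperTriangular htri]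
    apply Finset.prod_eq_one
    intro i _
    simp [hU]
  have hdetE : E.det = ((Equiv.Perm.sign (Fin.revPerm : Equiv.Perm (Fin m)) : ℤˣ) : ℤ) := by
    rw [hLU, Matrix.det_mul, hdetU, mul_one]
    have h : T.submatrix Fin.rev id = T.submatrix (Fin.revPerm : Equiv.Perm (Fin m)) id := rfl
    rw [h, Matrix.det_permute, hdetT, mul_one]
    norm_cast
  rcases Int.units_eq_one_or ((Equiv.Perm.sign (Fin.revPerm : Equiv.Perm (Fin m)) : ℤˣ)) with h | h
  · left; rw [hdetE, h]; rfl
  · right; rw [hdetE, h]; rfl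
end
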